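/- Let ι be a fixed-point-free involution of {1,…,2n}. Then the set {w ∈ S_{2n} : w⁻¹ ∘ J̄_n ∘ w = ι} is nonempty, and the minimum of l(w) over this set equals c(ι) + 2·r(ι) = (l(ι) − n)/2. (The minimizers are the pair permutations of ι.) -/

import Mathlib

/-- A fixed-point-free involution. -/
def isFPF {m : ℕ} (ι : Equiv.Perm (Fin m)) : Prop :=
  ι * ι = 1 ∧ ∀ i, ι i ≠ i

/-- The length (number of inversions) of a permutation of `Fin m`. -/
def invLength {m : ℕ} (π : Equiv.Perm (Fin m)) : ℕ :=
  Finset.card (Finset.univ.filter fun p : Fin m × Fin m => p.1 < p.2 ∧ π p.2 < π p.1)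

/-- The number of crossing pairs of arcs `a < b < ι a < ι b` of a fixed-point-free
involution (the number of countryside involutions contained in it). -/
def crossings {m : ℕ} (ι : Equiv.Perm (Fin m)) : ℕ :=
  Finset.card (Finset.univ.filter fun p : Fin m × Fin m =>
    p.1 < p.2 ∧ p.2 < ι p.1 ∧ ι p.1 < ι p.2)

/-- The number of nesting pairs of arcs `a < b < ι b < ι a` of a fixed-point-free
involution (the number of rainbow involutions contained in it). -/
def nestings {m : ℕ} (ι : Equiv.Perm (Fin m)) : ℕ :=
  Finset.card (Finset.univ.filter fun p : Fin m × Fin m =>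
    p.1 < p.2 ∧ p.2 < ι p.2 ∧ ι p.2 < ι p.1)

/-- The fixed-point-free involution `J̄ₙ = 2143⋯(2n)(2n−1)`, in 0-based indexing:
it swaps `2k ↔ 2k+1`. -/
def Jbar (n : ℕ) : Equiv.Perm (Fin (2*n)) where
  toFun i := ⟨2*(i.val/2) + (1 - i.val % 2), by have := i.isLt; omega⟩
  invFun i := ⟨2*(i.val/2) + (1 - i.val % 2), by have := i.isLt; omega⟩
  left_inv i := by apply Fin.ext; simp only; omega
  right_inv i := by apply Fin.ext; simp only; omega

lemma invLength_inv {m : ℕ} (π : Equiv.Perm (Fin m)) : invLength π⁻¹ = invLength π := by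
  unfold invLength
  apply Finset.card_bij' (fun p _ => (π⁻¹ p.2, π⁻¹ p.1)) (fun q _ => (π q.2, π q.1))
  · intro p hp
    simp only [Finset.mem_filter, Finset.mem_univ, true_and] at hp ⊢
    exact ⟨hp.2, by simpa using hp.1⟩
  · intro q hq
    simp only [Finset.mem_filter, Finset.mem_univ, true_and] at hq ⊢
    exact ⟨hq.2, by simpa using hq.1⟩
  · intro p _; simp
  · intro q _; simp

lemma invLength_mul_le {m : ℕ} (σ τ : Equiv.Perm (Fin m)) :
    invLength (σ * τ) ≤ invLength σ + invLength τ := by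
  unfold invLength
  set T2 := Finset.univ.filter (fun p : Fin m × Fin m =>
    p.1 < p.2 ∧ τ p.1 < τ p.2 ∧ σ (τ p.2) < σ (τ p.1)) with hT2
  have hsub : Finset.univ.filter (fun p : Fin m × Fin m => p.1 < p.2 ∧ (σ * τ) p.2 < (σ * τ) p.1)
      ⊆ (Finset.univ.filter fun p : Fin m × Fin m => p.1 < p.2 ∧ τ p.2 < τ p.1) ∪ T2 := by
    intro p hp
    rw [Finset.mem_filter] at hp
    simp only [Finset.mem_filter, Finset.mem_univ, true_and, Finset.mem_union, hT2,
      Equiv.Perm.mul_apply] at hp ⊢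
    rcases lt_trichotomy (τ p.1) (τ p.2) with h | h | h
    · exact Or.inr ⟨hp.1, h, hp.2⟩
    · exact absurd (τ.injective h) (ne_of_lt hp.1)
    · exact Or.inl ⟨hp.1, h⟩
  calc _ ≤ _ := Finset.card_le_card hsub
    _ ≤ _ + T2.card := Finset.card_union_le _ _
    _ ≤ _ := by
        rw [Nat.add_comm]
        apply Nat.add_le_add_right
        apply Finset.card_le_card_of_injOn (fun p => (τ p.1, τ p.2))
        · intro p hp
          simp only [Finset.mem_coe, Finset.mem_filter, Finset.mem_univ, true_and, hT2] at hp ⊢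
          exact ⟨hp.2.1, hp.2.2⟩
        · intro p _ q _ h
          simp only [Prod.ext_iff] at h
          exact Prod.ext (τ.injective h.1) (τ.injective h.2)

def Xset {m : ℕ} (ι : Equiv.Perm (Fin m)) : Finset (Fin m × Fin m) :=
  Finset.univ.filter fun p => p.1 < p.2 ∧ p.2 < ι p.1 ∧ p.2 < ι p.2

lemma fpf_apply_apply {m : ℕ} {ι : Equiv.Perm (Fin m)} (hι : isFPF ι) (x : Fin m) :
    ι (ι x) = x := by
  have := congrArg (fun π : Equiv.Perm (Fin m) => π x) hι.1
  simpa using this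

lemma Xset_card {m : ℕ} {ι : Equiv.Perm (Fin m)} (hι : isFPF ι) :
    (Xset ι).card = crossings ι + nestings ι := by
  rw [crossings, nestings]
  have h1 : (Finset.univ.filter fun p : Fin m × Fin m =>
      p.1 < p.2 ∧ p.2 < ι p.1 ∧ ι p.1 < ι p.2) = (Xset ι).filter (fun p => ι p.1 < ι p.2) := by
    rw [Xset, Finset.filter_filter]
    apply Finset.filter_congr
    intro p _
    constructor
    · rintro ⟨h1, h2, h3⟩; exact ⟨⟨h1, h2, lt_trans h2 h3⟩, h3⟩
    · rintro ⟨⟨h1, h2, _⟩, h4⟩; exact ⟨h1, h2, h4⟩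
  have h2 : (Finset.univ.filter fun p : Fin m × Fin m =>
      p.1 < p.2 ∧ p.2 < ι p.2 ∧ ι p.2 < ι p.1) = (Xset ι).filter (fun p => ¬ ι p.1 < ι p.2) := by
    rw [Xset, Finset.filter_filter]
    apply Finset.filter_congr
    intro p _
    constructor
    · rintro ⟨h1, h2, h3⟩; exact ⟨⟨h1, lt_trans h2 h3, h2⟩, not_lt.mpr (le_of_lt h3)⟩
    · rintro ⟨⟨h1, h2, h3⟩, h4⟩
      refine ⟨h1, h3, lt_of_le_of_ne (not_lt.mp h4) ?_⟩
      intro he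
      exact (ne_of_lt h1) (ι.injective he.symm)
  rw [h1, h2, Finset.card_filter_add_card_filter_not]

lemma card_minima {n : ℕ} {ι : Equiv.Perm (Fin (2*n))} (hι : isFPF ι) :
    (Finset.univ.filter fun i : Fin (2*n) => i < ι i).card = n := by
  have hcompl : (Finset.univ.filter fun i : Fin (2*n) => i < ι i)ᶜ
      = (Finset.univ.filter fun i : Fin (2*n) => i < ι i).image ι := by
    ext x
    simp only [Finset.mem_compl, Finset.mem_filter, Finset.mem_univ, true_and,
      Finset.mem_image, not_lt]
    constructor
    · intro h
      refine ⟨ι x, ?_, fpf_apply_apply hι x⟩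
      rw [fpf_apply_apply hι x]
      exact lt_of_le_of_ne h (hι.2 x)
    · rintro ⟨y, hy, rfl⟩
      rw [fpf_apply_apply hι y]
      exact le_of_lt hy
  have h1 : (Finset.univ.filter fun i : Fin (2*n) => i < ι i).card
      + (Finset.univ.filter fun i : Fin (2*n) => i < ι i)ᶜ.card = 2 * n := by
    rw [Finset.card_add_card_compl]
    simp
  rw [hcompl, Finset.card_image_of_injective _ ι.injective] at h1
  omega

lemma invLength_fpf {n : ℕ} {ι : Equiv.Perm (Fin (2*n))} (hι : isFPF ι) :
    invLength ι = n + 2 * ((Xset ι).card + nestings ι) := by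
  have hii := fpf_apply_apply hι
  have hsplit1 : ((Finset.univ.filter fun p : Fin (2*n) × Fin (2*n) =>
        (p.1 < p.2 ∧ ι p.2 < ι p.1) ∧ ι p.2 = p.1).card)
      + ((Finset.univ.filter fun p : Fin (2*n) × Fin (2*n) =>
        (p.1 < p.2 ∧ ι p.2 < ι p.1) ∧ ¬ ι p.2 = p.1).card) = invLength ι := by
    have := Finset.card_filter_add_card_filter_not
      (p := fun p : Fin (2*n) × Fin (2*n) => ι p.2 = p.1)
      (s := Finset.univ.filter fun p : Fin (2*n) × Fin (2*n) => p.1 < p.2 ∧ ι p.2 < ι p.1)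
    rw [Finset.filter_filter, Finset.filter_filter] at this
    rw [invLength]
    exact this
  have hfix : (Finset.univ.filter fun p : Fin (2*n) × Fin (2*n) =>
      (p.1 < p.2 ∧ ι p.2 < ι p.1) ∧ ι p.2 = p.1).card = n := by
    refine Eq.trans ?_ (card_minima hι)
    apply Finset.card_bij' (fun p _ => p.1) (fun a _ => (a, ι a))
    · intro p hp
      simp only [Finset.mem_filter, Finset.mem_univ, true_and] at hp ⊢
      obtain ⟨⟨h1, h2⟩, h3⟩ := hp
      have h4 : ι p.1 = p.2 := by rw [← h3, hii]
      rw [h4]; exact h1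
    · intro a ha
      simp only [Finset.mem_filter, Finset.mem_univ, true_and] at ha ⊢
      exact ⟨⟨ha, by rw [hii]; exact ha⟩, hii a⟩
    · intro p hp
      simp only [Finset.mem_filter, Finset.mem_univ, true_and] at hp
      have h4 : ι p.1 = p.2 := by rw [← hp.2, hii]
      exact Prod.ext rfl h4
    · intro a _; rfl
  have hsplit2 : ((Finset.univ.filter fun p : Fin (2*n) × Fin (2*n) =>
        ((p.1 < p.2 ∧ ι p.2 < ι p.1) ∧ ¬ ι p.2 = p.1) ∧ p.1 < ι p.2).card)
      + ((Finset.univ.filter fun p : Fin (2*n) × Fin (2*n) =>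
        ((p.1 < p.2 ∧ ι p.2 < ι p.1) ∧ ¬ ι p.2 = p.1) ∧ ¬ p.1 < ι p.2).card)
      = (Finset.univ.filter fun p : Fin (2*n) × Fin (2*n) =>
        (p.1 < p.2 ∧ ι p.2 < ι p.1) ∧ ¬ ι p.2 = p.1).card := by
    have := Finset.card_filter_add_card_filter_not
      (p := fun p : Fin (2*n) × Fin (2*n) => p.1 < ι p.2)
      (s := Finset.univ.filter fun p : Fin (2*n) × Fin (2*n) =>
        (p.1 < p.2 ∧ ι p.2 < ι p.1) ∧ ¬ ι p.2 = p.1)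
    rwa [Finset.filter_filter, Finset.filter_filter] at this
  have hmir : ((Finset.univ.filter fun p : Fin (2*n) × Fin (2*n) =>
        ((p.1 < p.2 ∧ ι p.2 < ι p.1) ∧ ¬ ι p.2 = p.1) ∧ ¬ p.1 < ι p.2).card)
      = ((Finset.univ.filter fun p : Fin (2*n) × Fin (2*n) =>
        ((p.1 < p.2 ∧ ι p.2 < ι p.1) ∧ ¬ ι p.2 = p.1) ∧ p.1 < ι p.2).card) := by
    apply Finset.card_bij' (fun p _ => (ι p.2, ι p.1)) (fun p _ => (ι p.2, ι p.1))
    · intro p hp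
      simp only [Finset.mem_filter, Finset.mem_univ, true_and, hii] at hp ⊢
      obtain ⟨⟨⟨h1, h2⟩, h3⟩, h4⟩ := hp
      have h5 : ι p.2 < p.1 := lt_of_le_of_ne (not_lt.mp h4) h3
      exact ⟨⟨⟨h2, h1⟩, fun he => h3 he.symm⟩, h5⟩
    · intro p hp
      simp only [Finset.mem_filter, Finset.mem_univ, true_and, hii] at hp ⊢
      obtain ⟨⟨⟨h1, h2⟩, h3⟩, h4⟩ := hp
      exact ⟨⟨⟨h2, h1⟩, fun he => h3 he.symm⟩, not_lt.mpr (le_of_lt h4)⟩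
    · intro p _; simp [hii]
    · intro p _; simp [hii]
  have hR : ((Finset.univ.filter fun p : Fin (2*n) × Fin (2*n) =>
        ((p.1 < p.2 ∧ ι p.2 < ι p.1) ∧ ¬ ι p.2 = p.1) ∧ p.1 < ι p.2).card)
      = nestings ι + (Xset ι).card := by
    have hsplit3 : ((Finset.univ.filter fun p : Fin (2*n) × Fin (2*n) =>
          (((p.1 < p.2 ∧ ι p.2 < ι p.1) ∧ ¬ ι p.2 = p.1) ∧ p.1 < ι p.2) ∧ p.2 < ι p.2).card)
        + ((Finset.univ.filter fun p : Fin (2*n) × Fin (2*n) =>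
          (((p.1 < p.2 ∧ ι p.2 < ι p.1) ∧ ¬ ι p.2 = p.1) ∧ p.1 < ι p.2) ∧ ¬ p.2 < ι p.2).card)
        = ((Finset.univ.filter fun p : Fin (2*n) × Fin (2*n) =>
          ((p.1 < p.2 ∧ ι p.2 < ι p.1) ∧ ¬ ι p.2 = p.1) ∧ p.1 < ι p.2).card) := by
      have := Finset.card_filter_add_card_filter_not
        (p := fun p : Fin (2*n) × Fin (2*n) => p.2 < ι p.2)
        (s := Finset.univ.filter fun p : Fin (2*n) × Fin (2*n) =>
          ((p.1 < p.2 ∧ ι p.2 < ι p.1) ∧ ¬ ι p.2 = p.1) ∧ p.1 < ι p.2)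
      rwa [Finset.filter_filter, Finset.filter_filter] at this
    have hN : (Finset.univ.filter fun p : Fin (2*n) × Fin (2*n) =>
          (((p.1 < p.2 ∧ ι p.2 < ι p.1) ∧ ¬ ι p.2 = p.1) ∧ p.1 < ι p.2) ∧ p.2 < ι p.2).card
        = nestings ι := by
      rw [nestings]
      congr 1
      apply Finset.filter_congr
      intro p _
      constructor
      · rintro ⟨⟨⟨⟨h1, h2⟩, _⟩, _⟩, h5⟩; exact ⟨h1, h5, h2⟩
      · rintro ⟨h1, h2, h3⟩
        exact ⟨⟨⟨⟨h1, h3⟩, fun he => absurd (he ▸ h2) (not_lt.mpr (le_of_lt h1))⟩,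
          lt_trans h1 h2⟩, h2⟩
    have hX : (Finset.univ.filter fun p : Fin (2*n) × Fin (2*n) =>
          (((p.1 < p.2 ∧ ι p.2 < ι p.1) ∧ ¬ ι p.2 = p.1) ∧ p.1 < ι p.2) ∧ ¬ p.2 < ι p.2).card
        = (Xset ι).card := by
      refine Finset.card_bij' (fun p _ => (p.1, ι p.2)) (fun q _ => (q.1, ι q.2))
        ?_ ?_ ?_ ?_
      · intro p hp
        simp only [Finset.mem_filter, Finset.mem_univ, true_and, Xset, hii] at hp ⊢
        obtain ⟨⟨⟨⟨h1, h2⟩, h3⟩, h4⟩, h5⟩ := hp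
        exact ⟨h4, h2, lt_of_le_of_ne (not_lt.mp h5) (hι.2 p.2)⟩
      · intro q hq
        simp only [Finset.mem_filter, Finset.mem_univ, true_and, Xset, hii] at hq ⊢
        obtain ⟨h1, h2, h3⟩ := hq
        exact ⟨⟨⟨⟨lt_trans h1 h3, h2⟩, ne_of_gt h1⟩, h1⟩, not_lt.mpr (le_of_lt h3)⟩
      · intro p _; simp [hii]
      · intro q _; simp [hii]
    omega
  omega

lemma Jbar_val {n : ℕ} (i : Fin (2*n)) : ((Jbar n) i).val = 2*(i.val/2) + (1 - i.val % 2) := rfl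

lemma exists_w {n : ℕ} (ι : Equiv.Perm (Fin (2*n))) (hι : isFPF ι) :
    ∃ w : Equiv.Perm (Fin (2*n)), w⁻¹ * Jbar n * w = ι ∧
      invLength w = (Xset ι).card + nestings ι := by
  classical
  have hii := fpf_apply_apply hι
  have hcard := card_minima hι
  set A := Finset.univ.filter fun i : Fin (2*n) => i < ι i with hA
  set e : Fin n ↪o Fin (2*n) := A.orderEmbOfFin hcard with he
  have he_mem : ∀ k, e k ∈ A := fun k => A.orderEmbOfFin_mem hcard k
  have he_lt : ∀ k, e k < ι (e k) := by
    intro k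
    have := he_mem k
    simp only [hA, Finset.mem_filter, Finset.mem_univ, true_and] at this
    exact this
  have he_surj : ∀ a ∈ A, ∃ k, e k = a := by
    intro a ha
    have : a ∈ Set.range e := by
      rw [he, Finset.range_orderEmbOfFin]
      exact ha
    exact this
  have hnotA : ∀ a ∈ A, ι a ∉ A := by
    intro a ha hb
    simp only [hA, Finset.mem_filter, Finset.mem_univ, true_and] at ha hb
    rw [hii] at hb
    exact absurd (lt_trans ha hb) (lt_irrefl a)
  set kf : Fin (2*n) → Fin n := fun x => ⟨x.val/2, by have := x.isLt; omega⟩ with hkf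
  set f : Fin (2*n) → Fin (2*n) :=
    fun i => if i.val % 2 = 0 then e (kf i) else ι (e (kf i)) with hf
  have hfe : ∀ x : Fin (2*n), x.val % 2 = 0 → f x = e (kf x) := by
    intro x hx; rw [hf]; simp only [hx, if_pos]
  have hfo : ∀ x : Fin (2*n), x.val % 2 = 1 → f x = ι (e (kf x)) := by
    intro x hx; rw [hf]; simp only [hx]; norm_num
  have hinj : Function.Injective f := by
    intro i j hij
    have hkeq : ∀ x y : Fin (2*n), kf x = kf y → x.val % 2 = y.val % 2 → x = y := by
      intro x y hk hm
      have : x.val / 2 = y.val / 2 := congrArg Fin.val hk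
      apply Fin.ext
      omega
    rcases Nat.mod_two_eq_zero_or_one i.val with hi | hi <;>
      rcases Nat.mod_two_eq_zero_or_one j.val with hj | hj
    · rw [hfe i hi, hfe j hj] at hij
      exact hkeq i j (e.injective hij) (by omega)
    · rw [hfe i hi, hfo j hj] at hij
      exact absurd (hij ▸ he_mem (kf i)) (hnotA (e (kf j)) (he_mem (kf j)))
    · rw [hfo i hi, hfe j hj] at hij
      exact absurd (hij.symm ▸ he_mem (kf j)) (hnotA (e (kf i)) (he_mem (kf i)))
    · rw [hfo i hi, hfo j hj] at hij
      exact hkeq i j (e.injective (ι.injective hij)) (by omega)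
  set u : Equiv.Perm (Fin (2*n)) := Equiv.ofBijective f (Finite.injective_iff_bijective.mp hinj) with hu
  have hu_apply : ∀ x, u x = f x := fun _ => rfl
  have hconj : ∀ y : Fin (2*n), u ((Jbar n) y) = ι (u y) := by
    intro y
    rcases Nat.mod_two_eq_zero_or_one y.val with hy | hy
    · have hJ : ((Jbar n) y).val = y.val + 1 := by rw [Jbar_val]; omega
      have hJo : ((Jbar n) y).val % 2 = 1 := by omega
      have hk : kf ((Jbar n) y) = kf y := by
        apply Fin.ext
        simp only [hkf]
        omega
      rw [hu_apply, hu_apply, hfo _ hJo, hfe _ hy, hk]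
    · have hJ : ((Jbar n) y).val = y.val - 1 := by rw [Jbar_val]; omega
      have hJo : ((Jbar n) y).val % 2 = 0 := by omega
      have hk : kf ((Jbar n) y) = kf y := by
        apply Fin.ext
        simp only [hkf]
        omega
      rw [hu_apply, hu_apply, hfe _ hJo, hfo _ hy, hk, hii]
  have hAmem_even : ∀ x, u x ∈ A → x.val % 2 = 0 := by
    intro x hx
    rcases Nat.mod_two_eq_zero_or_one x.val with h | h
    · exact h
    · rw [hu_apply, hfo _ h] at hx
      exact absurd hx (hnotA (e (kf x)) (he_mem (kf x)))
  have hparity : ∀ x y : Fin (2*n), x.val % 2 = 1 → y.val % 2 = 0 →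
      (x < y ↔ kf x < kf y) ∧ (y < x ↔ kf y ≤ kf x) := by
    intro x y hx hy
    rw [Fin.lt_def, Fin.lt_def, Fin.le_def]
    simp only [hkf]
    omega
  have heven_lt : ∀ x y : Fin (2*n), x.val % 2 = y.val % 2 → (x < y ↔ kf x < kf y) := by
    intro x y h
    rw [Fin.lt_def, Fin.lt_def]
    simp only [hkf]
    omega
  refine ⟨u⁻¹, ?_, ?_⟩
  · ext x
    simp only [Equiv.Perm.mul_apply, inv_inv]
    rw [hconj (u⁻¹ x), Equiv.Perm.coe_inv, Equiv.apply_symm_apply]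
  · rw [invLength_inv]
    have hsplit : ((Finset.univ.filter fun p : Fin (2*n) × Fin (2*n) =>
          (p.1 < p.2 ∧ u p.2 < u p.1) ∧ p.2.val % 2 = 0).card)
        + ((Finset.univ.filter fun p : Fin (2*n) × Fin (2*n) =>
          (p.1 < p.2 ∧ u p.2 < u p.1) ∧ ¬ p.2.val % 2 = 0).card) = invLength u := by
      have := Finset.card_filter_add_card_filter_not
        (p := fun p : Fin (2*n) × Fin (2*n) => p.2.val % 2 = 0)
        (s := Finset.univ.filter fun p : Fin (2*n) × Fin (2*n) => p.1 < p.2 ∧ u p.2 < u p.1)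
      rw [Finset.filter_filter, Finset.filter_filter] at this
      exact this
    have hF1 : ((Finset.univ.filter fun p : Fin (2*n) × Fin (2*n) =>
        (p.1 < p.2 ∧ u p.2 < u p.1) ∧ p.2.val % 2 = 0).card) = (Xset ι).card := by
      refine Finset.card_bij' (fun p _ => (ι (u p.1), u p.2))
        (fun q _ => (u⁻¹ (ι q.1), u⁻¹ q.2)) ?_ ?_ ?_ ?_
      · intro p hp
        simp only [Finset.mem_filter, Finset.mem_univ, true_and, Xset] at hp ⊢
        obtain ⟨⟨h1, h2⟩, h3⟩ := hp
        have hq2 : u p.2 = e (kf p.2) := by rw [hu_apply, hfe _ h3]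
        have hp1odd : p.1.val % 2 = 1 := by
          rcases Nat.mod_two_eq_zero_or_one p.1.val with h | h
          · exfalso
            have hup1 : u p.1 = e (kf p.1) := by rw [hu_apply, hfe _ h]
            have : kf p.1 < kf p.2 := (heven_lt p.1 p.2 (by omega)).mp h1
            have : u p.1 < u p.2 := by
              rw [hup1, hq2]
              exact e.lt_iff_lt.mpr this
            exact absurd h2 (not_lt.mpr (le_of_lt this))
          · exact h
        have hup1 : u p.1 = ι (e (kf p.1)) := by rw [hu_apply, hfo _ hp1odd]
        have hiup1 : ι (u p.1) = e (kf p.1) := by rw [hup1, hii]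
        refine ⟨?_, ?_, ?_⟩
        · rw [hiup1, hq2]
          exact e.lt_iff_lt.mpr (((hparity p.1 p.2 hp1odd h3).1).mp h1)
        · rw [hiup1, ← hup1]
          exact h2
        · rw [hq2]
          exact he_lt _
      · intro q hq
        simp only [Finset.mem_filter, Finset.mem_univ, true_and, Xset] at hq ⊢
        obtain ⟨h1, h2, h3⟩ := hq
        have ha1 : q.1 ∈ A := by
          simp only [hA, Finset.mem_filter, Finset.mem_univ, true_and]
          exact lt_trans h1 h2
        have ha2 : q.2 ∈ A := by
          simp only [hA, Finset.mem_filter, Finset.mem_univ, true_and]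
          exact h3
        have hup1 : u (u⁻¹ (ι q.1)) = ι q.1 := Equiv.apply_symm_apply u _
        have hup2 : u (u⁻¹ q.2) = q.2 := Equiv.apply_symm_apply u _
        have hp2even : (u⁻¹ q.2).val % 2 = 0 := hAmem_even _ (by rw [hup2]; exact ha2)
        have hp1odd : (u⁻¹ (ι q.1)).val % 2 = 1 := by
          rcases Nat.mod_two_eq_zero_or_one (u⁻¹ (ι q.1)).val with h | h
          · exfalso
            have h5 : u (u⁻¹ (ι q.1)) = e (kf (u⁻¹ (ι q.1))) := by rw [hu_apply, hfe _ h]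
            rw [hup1] at h5
            exact hnotA q.1 ha1 (h5 ▸ he_mem _)
          · exact h
        have hkf1 : e (kf (u⁻¹ (ι q.1))) = q.1 := by
          have h5 := hfo _ hp1odd
          rw [← hu_apply, hup1] at h5
          exact ι.injective h5.symm
        have hkf2 : e (kf (u⁻¹ q.2)) = q.2 := by
          have h5 := hfe _ hp2even
          rw [← hu_apply, hup2] at h5
          exact h5.symm
        refine ⟨⟨?_, ?_⟩, hp2even⟩
        · rw [(hparity _ _ hp1odd hp2even).1, ← e.lt_iff_lt, hkf1, hkf2]
          exact h1
        · rw [hup1, hup2]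
          exact h2
      · intro p hp
        simp only [hii, Equiv.Perm.coe_inv, Equiv.symm_apply_apply]
      · intro q hq
        simp only [hii, Equiv.Perm.coe_inv, Equiv.apply_symm_apply]
    have hF2 : ((Finset.univ.filter fun p : Fin (2*n) × Fin (2*n) =>
        (p.1 < p.2 ∧ u p.2 < u p.1) ∧ ¬ p.2.val % 2 = 0).card) = nestings ι := by
      rw [nestings]
      refine Finset.card_bij' (fun p _ => (ι (u p.1), ι (u p.2)))
        (fun q _ => (u⁻¹ (ι q.1), u⁻¹ (ι q.2))) ?_ ?_ ?_ ?_
      · intro p hp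
        simp only [Finset.mem_filter, Finset.mem_univ, true_and] at hp ⊢
        obtain ⟨⟨h1, h2⟩, h3⟩ := hp
        have h3' : p.2.val % 2 = 1 := by omega
        have hq2 : u p.2 = ι (e (kf p.2)) := by rw [hu_apply, hfo _ h3']
        have hiup2 : ι (u p.2) = e (kf p.2) := by rw [hq2, hii]
        have hp1odd : p.1.val % 2 = 1 := by
          rcases Nat.mod_two_eq_zero_or_one p.1.val with h | h
          · exfalso
            have hup1 : u p.1 = e (kf p.1) := by rw [hu_apply, hfe _ h]
            have hlt : e (kf p.2) < e (kf p.1) := by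
              rw [← hup1]
              exact lt_trans (he_lt _) (by rw [← hq2]; exact h2)
            have h6 : kf p.2 < kf p.1 := e.lt_iff_lt.mp hlt
            have hle : kf p.1 ≤ kf p.2 := ((hparity p.2 p.1 h3' h).2).mp h1
            exact absurd h6 (not_lt.mpr hle)
          · exact h
        have hup1 : u p.1 = ι (e (kf p.1)) := by rw [hu_apply, hfo _ hp1odd]
        have hiup1 : ι (u p.1) = e (kf p.1) := by rw [hup1, hii]
        refine ⟨?_, ?_, ?_⟩
        · rw [hiup1, hiup2]
          exact e.lt_iff_lt.mpr ((heven_lt p.1 p.2 (by omega)).mp h1)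
        · rw [hiup2]
          exact he_lt _
        · rw [hiup2, hiup1, ← hq2, ← hup1]
          exact h2
      · intro q hq
        simp only [Finset.mem_filter, Finset.mem_univ, true_and] at hq ⊢
        obtain ⟨h1, h2, h3⟩ := hq
        have ha1 : q.1 ∈ A := by
          simp only [hA, Finset.mem_filter, Finset.mem_univ, true_and]
          exact lt_trans (lt_trans h1 h2) h3
        have ha2 : q.2 ∈ A := by
          simp only [hA, Finset.mem_filter, Finset.mem_univ, true_and]
          exact h2
        have hup1 : u (u⁻¹ (ι q.1)) = ι q.1 := Equiv.apply_symm_apply u _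
        have hup2 : u (u⁻¹ (ι q.2)) = ι q.2 := Equiv.apply_symm_apply u _
        have hp1odd : (u⁻¹ (ι q.1)).val % 2 = 1 := by
          rcases Nat.mod_two_eq_zero_or_one (u⁻¹ (ι q.1)).val with h | h
          · exfalso
            have h5 : u (u⁻¹ (ι q.1)) = e (kf (u⁻¹ (ι q.1))) := by rw [hu_apply, hfe _ h]
            rw [hup1] at h5
            exact hnotA q.1 ha1 (h5 ▸ he_mem _)
          · exact h
        have hp2odd : (u⁻¹ (ι q.2)).val % 2 = 1 := by
          rcases Nat.mod_two_eq_zero_or_one (u⁻¹ (ι q.2)).val with h | h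
          · exfalso
            have h5 : u (u⁻¹ (ι q.2)) = e (kf (u⁻¹ (ι q.2))) := by rw [hu_apply, hfe _ h]
            rw [hup2] at h5
            exact hnotA q.2 ha2 (h5 ▸ he_mem _)
          · exact h
        have hkf1 : e (kf (u⁻¹ (ι q.1))) = q.1 := by
          have h5 := hfo _ hp1odd
          rw [← hu_apply, hup1] at h5
          exact ι.injective h5.symm
        have hkf2 : e (kf (u⁻¹ (ι q.2))) = q.2 := by
          have h5 := hfo _ hp2odd
          rw [← hu_apply, hup2] at h5
          exact ι.injective h5.symm
        refine ⟨⟨?_, ?_⟩, by omega⟩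
        · rw [heven_lt _ _ (by omega), ← e.lt_iff_lt, hkf1, hkf2]
          exact h1
        · rw [hup1, hup2]
          exact h3
      · intro p hp
        simp only [hii, Equiv.Perm.coe_inv, Equiv.symm_apply_apply]
      · intro q hq
        simp only [hii, Equiv.Perm.coe_inv, Equiv.apply_symm_apply]
    rw [← hsplit, hF1, hF2]

lemma isFPF_Jbar (n : ℕ) : isFPF (Jbar n) := by
  constructor
  · ext i
    rw [Equiv.Perm.mul_apply, Equiv.Perm.one_apply]
    rw [Jbar_val, Jbar_val]
    omega
  · intro i h
    have := congrArg Fin.val h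
    rw [Jbar_val] at this
    omega

lemma crossings_Jbar (n : ℕ) : crossings (Jbar n) = 0 := by
  rw [crossings, Finset.card_eq_zero, Finset.filter_eq_empty_iff]
  rintro p - ⟨h1, h2, h3⟩
  simp only [Fin.lt_def, Jbar_val] at h1 h2 h3
  omega

lemma nestings_Jbar (n : ℕ) : nestings (Jbar n) = 0 := by
  rw [nestings, Finset.card_eq_zero, Finset.filter_eq_empty_iff]
  rintro p - ⟨h1, h2, h3⟩
  simp only [Fin.lt_def, Jbar_val] at h1 h2 h3
  omega

lemma invLength_Jbar (n : ℕ) : invLength (Jbar n) = n := by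
  have h := invLength_fpf (isFPF_Jbar n)
  have hx := Xset_card (isFPF_Jbar n)
  have hc := crossings_Jbar n
  have hn := nestings_Jbar n
  omega

/-- the set `{w : w⁻¹ ∘ J̄ₙ ∘ w = ι}` is nonempty and the minimum of
`l(w)` over it equals `c(ι) + 2·r(ι) = (l(ι) − n)/2`. -/
theorem min_length_conjugator {n : ℕ} (ι : Equiv.Perm (Fin (2*n))) (hι : isFPF ι) :
    ∃ w : Equiv.Perm (Fin (2*n)), w⁻¹ * Jbar n * w = ι ∧
      invLength w = crossings ι + 2 * nestings ι ∧
      (∀ v : Equiv.Perm (Fin (2*n)), v⁻¹ * Jbar n * v = ι → invLength w ≤ invLength v) ∧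
      2 * invLength w + n = invLength ι := by
  obtain ⟨w, hw, hlen⟩ := exists_w ι hι
  have hx := Xset_card hι
  have hfpf := invLength_fpf hι
  refine ⟨w, hw, by omega, ?_, by omega⟩
  intro v hv
  have h1 : invLength ι ≤ invLength v⁻¹ + invLength (Jbar n) + invLength v := by
    rw [← hv]
    calc invLength (v⁻¹ * Jbar n * v) ≤ invLength (v⁻¹ * Jbar n) + invLength v :=
          invLength_mul_le _ _
      _ ≤ invLength v⁻¹ + invLength (Jbar n) + invLength v :=
          Nat.add_le_add_right (invLength_mul_le _ _) _
  rw [invLength_inv, invLength_Jbar] at h1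
  omega
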